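/- Let k ≥ 2, let f ∈ C^k([0,l]) with 0 ≤ l ≤ 1, let σ_{k−1} ∈ {±1}, and let ε > 0, κ > 0. Assume σ_{k−1} f^{(k−1)}(0) ≥ −ε and σ_{k−1} f^{(k−1)}(l) ≥ −ε, and |f^{(k)}(t)| ≥ κ for all t ∈ [0,l]. Then either σ_{k−1} f^{(k−1)}(t) ≥ κ t − ε for all t ∈ [0,l], or σ_{k−1} f^{(k−1)}(t) ≥ κ (l − t) − ε for all t ∈ [0,l]. -/

import Mathlib

open Set

/-- if `σ_{k-1} f^{(k-1)} ≥ -ε` at both endpoints of `[0, l]` and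
`|f^{(k)}| ≥ κ` on `[0, l]`, then either `σ_{k-1} f^{(k-1)}(t) ≥ κ t - ε` for all `t`,
or `σ_{k-1} f^{(k-1)}(t) ≥ κ (l - t) - ε` for all `t ∈ [0, l]`. -/
theorem penultimate_derivative_dichotomy (k : ℕ) (hk : 2 ≤ k) (l : ℝ)
    (hl0 : 0 ≤ l) (hl1 : l ≤ 1)
    (f : ℝ → ℝ) (hf : ContDiffOn ℝ k f (Icc 0 l))
    (σ : ℝ) (hσ : σ = 1 ∨ σ = -1)
    (ε κ : ℝ) (hε : 0 < ε) (hκ : 0 < κ)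
    (hend0 : -ε ≤ σ * iteratedDerivWithin (k - 1) f (Icc 0 l) 0)
    (hendl : -ε ≤ σ * iteratedDerivWithin (k - 1) f (Icc 0 l) l)
    (hfk : ∀ t ∈ Icc 0 l, κ ≤ |iteratedDerivWithin k f (Icc 0 l) t|) :
    (∀ t ∈ Icc 0 l, κ * t - ε ≤ σ * iteratedDerivWithin (k - 1) f (Icc 0 l) t) ∨
    (∀ t ∈ Icc 0 l, κ * (l - t) - ε ≤ σ * iteratedDerivWithin (k - 1) f (Icc 0 l) t) := by
  rcases eq_or_lt_of_le hl0 with rfl | hl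
  · left
    intro t ht
    rw [mem_Icc] at ht
    have : t = 0 := le_antisymm ht.2 ht.1
    subst this
    simpa using hend0
  set s : Set ℝ := Icc (0:ℝ) l with hs
  have hus : UniqueDiffOn ℝ s := uniqueDiffOn_Icc hl
  set g : ℝ → ℝ := iteratedDerivWithin (k - 1) f s with hg
  set g' : ℝ → ℝ := iteratedDerivWithin k f s with hg'
  have hσabs : |σ| = 1 := by rcases hσ with rfl | rfl <;> norm_num
  -- continuity of g on s
  have hgc : ContinuousOn g s :=
    hf.continuousOn_iteratedDerivWithin (by exact_mod_cast Nat.sub_le k 1) hus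
  have hgc' : ContinuousOn g' s :=
    hf.continuousOn_iteratedDerivWithin le_rfl hus
  have hkk : k - 1 + 1 = k := Nat.sub_add_cancel (le_trans one_le_two hk)
  have hlt : ((k - 1 : ℕ) : WithTop ℕ∞) < ((k : ℕ) : WithTop ℕ∞) := by
    exact_mod_cast Nat.sub_lt (Nat.lt_of_lt_of_le Nat.zero_lt_two hk) Nat.one_pos
  have hdiff : DifferentiableOn ℝ g s :=
    hf.differentiableOn_iteratedDerivWithin hlt hus
  have hderiv : ∀ x ∈ Ioo (0:ℝ) l, HasDerivAt g (g' x) x := by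
    intro x hx
    have hxs : x ∈ s := Ioo_subset_Icc_self hx
    have hmem : s ∈ nhds x := Icc_mem_nhds hx.1 hx.2
    have h1 : HasDerivWithinAt g (derivWithin g s x) s x :=
      (hdiff x hxs).hasDerivWithinAt
    have h2 : derivWithin g s x = g' x := by
      rw [hg', ← hkk, iteratedDerivWithin_succ]
    exact h2 ▸ h1.hasDerivAt hmem
  -- H = σ * g
  set H : ℝ → ℝ := fun t => σ * g t with hH
  have hHc : ContinuousOn H s := continuousOn_const.mul hgc
  have hHd : ∀ x ∈ interior s, HasDerivAt H (σ * g' x) x := by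
    intro x hx
    rw [hs, interior_Icc] at hx
    exact (hderiv x hx).const_mul σ
  have hHdiff : DifferentiableOn ℝ H (interior s) := fun x hx =>
    ((hHd x hx).differentiableAt).differentiableWithinAt
  have habs : ∀ t ∈ s, κ ≤ |σ * g' t| := by
    intro t ht
    rw [abs_mul, hσabs, one_mul]
    exact hfk t ht
  -- sign dichotomy for σ * g'
  have hsign : (∀ t ∈ s, κ ≤ σ * g' t) ∨ (∀ t ∈ s, σ * g' t ≤ -κ) := by
    have h0s : (0:ℝ) ∈ s := left_mem_Icc.2 hl.le
    rcases le_abs.mp (habs 0 h0s) with h0 | h0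
    · left
      intro t ht
      by_contra hcon
      push_neg at hcon
      -- σ g' t < κ, but |σ g' t| ≥ κ so σ g' t ≤ -κ < 0 < σ g' 0, IVT gives zero
      have ht' : σ * g' t ≤ -κ := by
        rcases le_abs.mp (habs t ht) with h | h
        · linarith
        · linarith
      have hsub : Icc (0:ℝ) t ⊆ s := Icc_subset_Icc le_rfl ht.2
      have hiv := intermediate_value_Icc' (f := fun x => σ * g' x) ht.1
        ((continuousOn_const.mul hgc').mono hsub)
      have h0mem : (0:ℝ) ∈ Icc (σ * g' t) (σ * g' 0) := ⟨by linarith, by linarith⟩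
      obtain ⟨c, hc, hc0⟩ := hiv h0mem
      have := habs c (hsub hc)
      have hc0' : σ * g' c = 0 := hc0
      rw [hc0'] at this
      simp at this
      linarith
    · right
      intro t ht
      by_contra hcon
      push_neg at hcon
      have ht' : κ ≤ σ * g' t := by
        rcases le_abs.mp (habs t ht) with h | h
        · exact h
        · linarith
      have hsub : Icc (0:ℝ) t ⊆ s := Icc_subset_Icc le_rfl ht.2
      have hiv := intermediate_value_Icc (f := fun x => σ * g' x) ht.1
        ((continuousOn_const.mul hgc').mono hsub)
      have h0mem : (0:ℝ) ∈ Icc (σ * g' 0) (σ * g' t) := ⟨by linarith, by linarith⟩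
      obtain ⟨c, hc, hc0⟩ := hiv h0mem
      have := habs c (hsub hc)
      have hc0' : σ * g' c = 0 := hc0
      rw [hc0'] at this
      simp at this
      linarith
  have hconv : Convex ℝ s := convex_Icc 0 l
  rcases hsign with hpos | hneg
  · left
    intro t ht
    have hdb : ∀ x ∈ interior s, κ ≤ deriv H x := by
      intro x hx
      rw [(hHd x hx).deriv]
      exact hpos x (interior_subset hx)
    have hmvt := hconv.mul_sub_le_image_sub_of_le_deriv hHc hHdiff hdb
      0 (left_mem_Icc.2 hl.le) t ht ht.1
    have h0 : -ε ≤ H 0 := hend0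
    simp only [hH] at hmvt h0 ⊢
    linarith
  · right
    intro t ht
    have hdb : ∀ x ∈ interior s, deriv H x ≤ -κ := by
      intro x hx
      rw [(hHd x hx).deriv]
      exact hneg x (interior_subset hx)
    have hmvt := hconv.image_sub_le_mul_sub_of_deriv_le hHc hHdiff hdb
      t ht l (right_mem_Icc.2 hl.le) ht.2
    have hle : -ε ≤ H l := hendl
    simp only [hH] at hmvt hle ⊢
    linarith
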